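/- Fix q with 0 < q < 1 and let λ₀, s₀ be real-valued functions on ℝ∖{0}. Suppose y is a real polynomial function of degree exactly n, with n ≥ 1, satisfying (D_q²y)(x) = λ₀(x)(D_qy)(x) + s₀(x)y(x) for all x ≠ 0. Then (s_n(x)λ_{n−1}(x) − s_{n−1}(x)λ_n(x))·(D_qy)(x) = 0 for all x ≠ 0. -/

import Mathlib

/-- The `q`-difference operator: `(D_q f)(x) = (f(x) - f(qx)) / ((1-q)x)`. -/
noncomputable def Dq (q : ℝ) (f : ℝ → ℝ) : ℝ → ℝ :=
  fun x => (f x - f (q * x)) / ((1 - q) * x)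

/-- The q-AIM sequences `(λ_n, s_n)` built from `(λ₀, s₀)`. -/
noncomputable def qdaim (q : ℝ) (l0 s0 : ℝ → ℝ) : ℕ → (ℝ → ℝ) × (ℝ → ℝ)
  | 0 => (l0, s0)
  | n + 1 =>
      (fun x => Dq q (qdaim q l0 s0 n).1 x + (qdaim q l0 s0 n).1 (q * x) * l0 x
          + (qdaim q l0 s0 n).2 (q * x),
       fun x => Dq q (qdaim q l0 s0 n).2 x + (qdaim q l0 s0 n).1 (q * x) * s0 x)

open Polynomial in
noncomputable def qD (q : ℝ) (Q : Polynomial ℝ) : Polynomial ℝ :=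
  Polynomial.C (1/(1-q)) * ((Q - Q.comp (Polynomial.C q * Polynomial.X)) /ₘ Polynomial.X)

open Polynomial in
lemma qD_spec (q : ℝ) (Q : Polynomial ℝ) :
    Polynomial.X * ((Q - Q.comp (Polynomial.C q * Polynomial.X)) /ₘ Polynomial.X)
      = Q - Q.comp (Polynomial.C q * Polynomial.X) := by
  have hdvd : (X : Polynomial ℝ) ∣ (Q - Q.comp (C q * X)) := by
    rw [Polynomial.X_dvd_iff]
    simp [Polynomial.coeff_sub, Polynomial.coeff_zero_eq_eval_zero]
  obtain ⟨R, hR⟩ := hdvd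
  rw [hR, Polynomial.mul_divByMonic_cancel_left _ (Polynomial.monic_X)]

open Polynomial in
lemma qD_eval (q : ℝ) (hq1 : q < 1) (Q : Polynomial ℝ) (x : ℝ) (hx : x ≠ 0) :
    (qD q Q).eval x = (Q.eval x - Q.eval (q * x)) / ((1 - q) * x) := by
  have h := congrArg (Polynomial.eval x) (qD_spec q Q)
  simp [Polynomial.eval_mul, Polynomial.eval_comp] at h
  have h1 : (1 : ℝ) - q ≠ 0 := by linarith
  rw [qD]
  simp [Polynomial.eval_mul]
  field_simp
  linear_combination h

open Polynomial in
lemma qD_deg (q : ℝ) (Q : Polynomial ℝ) : (qD q Q).natDegree ≤ Q.natDegree - 1 := by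
  rw [qD]
  refine le_trans (Polynomial.natDegree_C_mul_le _ _) ?_
  rw [Polynomial.natDegree_divByMonic _ Polynomial.monic_X, Polynomial.natDegree_X]
  have h2 : (Q.comp (C q * X)).natDegree ≤ Q.natDegree := by
    rw [Polynomial.natDegree_comp]
    calc Q.natDegree * (C q * X).natDegree ≤ Q.natDegree * 1 := by
          exact Nat.mul_le_mul_left _ (le_trans (Polynomial.natDegree_mul_le)
            (by simp))
      _ = Q.natDegree := by ring
  have := Polynomial.natDegree_sub_le Q (Q.comp (C q * X))
  omega

lemma iter_zero (q : ℝ) (hq0 : 0 < q) (hq1 : q < 1) :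
    ∀ (k : ℕ) (f : ℝ → ℝ) (Q : Polynomial ℝ),
      (∀ x : ℝ, x ≠ 0 → f x = Q.eval x) → Q.natDegree < k →
      ∀ x : ℝ, x ≠ 0 → (Dq q)^[k] f x = 0 := by
  intro k
  induction k with
  | zero => intro f Q h hk; omega
  | succ m ih =>
    intro f Q h hk x hx
    rw [Function.iterate_succ_apply]
    rcases Nat.eq_zero_or_pos m with hm | hm
    · subst hm
      interval_cases hQ : Q.natDegree
      · obtain ⟨c, rfl⟩ := Polynomial.natDegree_eq_zero.mp hQ
        simp only [Function.iterate_zero, id_eq, Dq]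
        rw [h x hx, h (q * x) (by positivity)]
        simp
    · refine ih (Dq q f) (qD q Q) ?_ (by have := qD_deg q Q; omega) x hx
      intro z hz
      rw [qD_eval q hq1 Q z hz, Dq, h z hz, h (q * z) (by positivity)]

lemma aim (q : ℝ) (hq0 : 0 < q) (hq1 : q < 1) (l0 s0 : ℝ → ℝ) (y : ℝ → ℝ)
    (hy : ∀ x : ℝ, x ≠ 0 → (Dq q)^[2] y x = l0 x * Dq q y x + s0 x * y x) :
    ∀ (k : ℕ) (x : ℝ), x ≠ 0 →
      (Dq q)^[k + 2] y x
        = (qdaim q l0 s0 k).1 x * Dq q y x + (qdaim q l0 s0 k).2 x * y x := by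
  intro k
  induction k with
  | zero =>
    intro x hx
    simpa [qdaim] using hy x hx
  | succ m ih =>
    intro x hx
    have hqx : q * x ≠ 0 := by positivity
    have h1 : ((1 : ℝ) - q) * x ≠ 0 := by
      have : (1 : ℝ) - q ≠ 0 := by linarith
      exact mul_ne_zero this hx
    have hx' := ih x hx
    have hqx' := ih (q * x) hqx
    have hyqx : y (q * x) = y x - (1 - q) * x * Dq q y x := by
      rw [Dq, mul_div_assoc', mul_div_cancel_left₀ _ h1]; ring
    have hDyqx : Dq q y (q * x)
        = Dq q y x - (1 - q) * x * (l0 x * Dq q y x + s0 x * y x) := by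
      have := hy x hx
      rw [Function.iterate_succ_apply, Function.iterate_one] at this
      rw [show Dq q (Dq q y) x = (Dq q y x - Dq q y (q * x)) / ((1 - q) * x) from rfl] at this
      field_simp at this ⊢
      rw [div_eq_iff (show (1:ℝ) - q ≠ 0 by linarith)] at this; linear_combination -this
    rw [show m + 1 + 2 = (m + 2) + 1 by ring, Function.iterate_succ_apply',
      show Dq q ((Dq q)^[m+2] y) x
        = ((Dq q)^[m+2] y x - (Dq q)^[m+2] y (q * x)) / ((1 - q) * x) from rfl,
      hx', hqx', hyqx, hDyqx]
    simp only [qdaim, Dq]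
    field_simp [show (1:ℝ) - q ≠ 0 by linarith]
    ring

theorem stmt_16 (q : ℝ) (hq0 : 0 < q) (hq1 : q < 1) (l0 s0 : ℝ → ℝ)
    (n : ℕ) (hn : 1 ≤ n)
    (y : ℝ → ℝ) (P : Polynomial ℝ) (hyP : ∀ x : ℝ, y x = P.eval x)
    (hdeg : P.natDegree = n)
    (hy : ∀ x : ℝ, x ≠ 0 → (Dq q)^[2] y x = l0 x * Dq q y x + s0 x * y x) :
    ∀ x : ℝ, x ≠ 0 →
      ((qdaim q l0 s0 n).2 x * (qdaim q l0 s0 (n - 1)).1 x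
          - (qdaim q l0 s0 (n - 1)).2 x * (qdaim q l0 s0 n).1 x) * Dq q y x = 0 := by
  intro x hx
  have hz1 : (Dq q)^[(n - 1) + 2] y x = 0 := by
    refine iter_zero q hq0 hq1 _ y P (fun z _ => hyP z) (by omega) x hx
  have hz2 : (Dq q)^[n + 2] y x = 0 := by
    refine iter_zero q hq0 hq1 _ y P (fun z _ => hyP z) (by omega) x hx
  have h1 := aim q hq0 hq1 l0 s0 y hy (n - 1) x hx
  have h2 := aim q hq0 hq1 l0 s0 y hy n x hx
  rw [hz1] at h1
  rw [hz2] at h2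
  linear_combination (-(qdaim q l0 s0 n).2 x) * h1
    + (qdaim q l0 s0 (n - 1)).2 x * h2
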